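/- Let T = U·P·V be a string over an alphabet Σ with |Σ| ≥ 3, where P is a non-empty string occurring exactly once in T, and |U| < |P| and |V| < |P|. Then there exists a string P' over Σ with Hamming distance d_H(P,P') = 1 such that P does not occur in T' = U·P'·V. -/

import Mathlib

open Classical

/-- `p` is a period of the string (list) `P`. -/
def IsPeriodOf {α : Type*} (P : List α) (p : ℕ) : Prop :=
  0 < p ∧ ∀ i, i + p < P.length → P[i]? = P[i + p]?

/-- The smallest period of `P`. -/
noncomputable def minPeriod {α : Type*} (P : List α) : ℕ := sInf {p | IsPeriodOf P p}

/-- `P` is periodic if its smallest period is at most `|P|/2`. -/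
def ListPeriodic {α : Type*} (P : List α) : Prop := 2 * minPeriod P ≤ P.length

/-- `P` occurs in `S` starting at position `i`. -/
def OccursAt {α : Type*} (P S : List α) (i : ℕ) : Prop :=
  i + P.length ≤ S.length ∧ (S.drop i).take P.length = P

/-- The set of starting positions of occurrences of `P` in `S`. -/
noncomputable def occ {α : Type*} (P S : List α) : Finset ℕ :=
  (Finset.range (S.length + 1)).filter (fun i => OccursAt P S i)

/-- Hamming distance between two (equal-length) strings. -/
noncomputable def hamming {α : Type*} (S T : List α) : ℕ :=
  ((List.range S.length).filter (fun i => S[i]? ≠ T[i]?)).length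

/-- `P` is `(τ,k)`-resilient in `S`. -/
def Resilient {α : Type*} (P S : List α) (τ k : ℕ) : Prop :=
  ∀ S' : List α, S'.length = S.length → hamming S S' ≤ k → τ ≤ (occ P S').card

/-- The fragment `S[x..y]` (inclusive). -/
def frag {α : Type*} (S : List α) (x y : ℕ) : List α := (S.drop x).take (y - x + 1)

/-- The fragment `S[x..y]` is a run of `S`. -/
def IsRun {α : Type*} (S : List α) (x y : ℕ) : Prop :=
  x ≤ y ∧ y < S.length ∧ 2 * minPeriod (frag S x y) ≤ y - x + 1 ∧
  (0 < x → ¬ IsPeriodOf (frag S (x - 1) y) (minPeriod (frag S x y))) ∧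
  (y + 1 < S.length → ¬ IsPeriodOf (frag S x (y + 1)) (minPeriod (frag S x y)))

section Aux

set_option linter.deprecated false

lemma get3 {α : Type*} (X W Y : List α) (x : ℕ) :
    (X ++ W ++ Y)[x]? =
      if x < X.length then X[x]?
      else if x < X.length + W.length then W[x - X.length]?
      else Y[x - X.length - W.length]? := by
  rw [List.append_assoc]
  by_cases h1 : x < X.length
  · rw [List.getElem?_append_left h1, if_pos h1]
  · rw [List.getElem?_append_right (by omega), if_neg h1]
    by_cases h2 : x < X.length + W.length
    · rw [List.getElem?_append_left (by omega), if_pos h2]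
    · rw [List.getElem?_append_right (by omega), if_neg h2]

lemma occursAt_iff {α : Type*} (P S : List α) (i : ℕ) :
    OccursAt P S i ↔ i + P.length ≤ S.length ∧
      ∀ t, t < P.length → S[i + t]? = P[t]? := by
  unfold OccursAt
  constructor
  · rintro ⟨h1, h2⟩
    refine ⟨h1, fun t ht => ?_⟩
    conv_rhs => rw [← h2]
    rw [List.getElem?_take_of_lt ht, List.getElem?_drop]
  · rintro ⟨h1, h2⟩
    refine ⟨h1, ?_⟩
    apply List.ext_getElem?
    intro t
    by_cases ht : t < P.length
    · rw [List.getElem?_take_of_lt ht, List.getElem?_drop, h2 t ht]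
    · rw [List.getElem?_eq_none_iff.2, Eq.comm, List.getElem?_eq_none_iff.2]
      · omega
      · rw [List.length_take, List.length_drop]
        omega

lemma mem_occ_iff {α : Type*} (P S : List α) (i : ℕ) :
    i ∈ occ P S ↔ OccursAt P S i := by
  unfold occ
  rw [Finset.mem_filter, Finset.mem_range]
  constructor
  · rintro ⟨-, h⟩; exact h
  · intro h; exact ⟨by have := h.1; omega, h⟩

end Aux

theorem stmt6 {α : Type*} [Fintype α] (hcard : 3 ≤ Fintype.card α)
    (U P V : List α) (hP : P ≠ [])
    (hU : U.length < P.length) (hV : V.length < P.length)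
    (honce : (occ P (U ++ P ++ V)).card = 1) :
    ∃ P' : List α, P'.length = P.length ∧ hamming P P' = 1 ∧
      occ P (U ++ P' ++ V) = ∅ := by
  classical
  set n := P.length with hn
  have hn1 : 1 ≤ n := List.length_pos_iff.mpr hP
  obtain ⟨a, ha⟩ : ∃ a, P[n - 1]? = some a :=
    ⟨P.get ⟨n - 1, by omega⟩, List.getElem?_eq_getElem (by omega)⟩
  -- get? of the original text
  have hTget : ∀ x, (U ++ P ++ V)[x]? =
      if x < U.length then U[x]?
      else if x < U.length + n then P[x - U.length]?
      else V[x - U.length - n]? := fun x => get3 U P V x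
  -- the modified pattern
  have hP'len : ∀ c : α, (P.take (n - 1) ++ [c]).length = n := by
    intro c
    simp [List.length_take]
    omega
  have hT'len : ∀ c : α, (U ++ (P.take (n - 1) ++ [c]) ++ V).length = U.length + n + V.length := by
    intro c
    simp [List.length_append, hP'len c]
    omega
  -- get? of the modified text
  have hT'get : ∀ (c : α) (x : ℕ), (U ++ (P.take (n - 1) ++ [c]) ++ V)[x]? =
      if x < U.length then U[x]?
      else if x < U.length + (n - 1) then P[x - U.length]?
      else if x = U.length + (n - 1) then some c
      else V[x - U.length - n]? := by
    intro c x
    rw [get3, hP'len c]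
    by_cases h1 : x < U.length
    · simp [h1]
    · rw [if_neg h1, if_neg h1]
      by_cases h2 : x < U.length + n
      · rw [if_pos h2]
        by_cases h3 : x < U.length + (n - 1)
        · rw [if_pos h3, List.getElem?_append_left (by rw [List.length_take]; omega),
            List.getElem?_take_of_lt (by omega)]
        · have hx : x = U.length + (n - 1) := by omega
          rw [if_neg h3, if_pos hx,
            List.getElem?_append_right (by rw [List.length_take]; omega)]
          have : x - U.length - (P.take (n - 1)).length = 0 := by
            rw [List.length_take]; omega
          rw [this]
          rfl
      · rw [if_neg h2, if_neg (by omega), if_neg (by omega)]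
  -- the genuine occurrence at position |U|
  have hoccU : OccursAt P (U ++ P ++ V) U.length := by
    rw [occursAt_iff]
    constructor
    · simp only [List.length_append]; omega
    · intro t ht
      rw [hTget]
      rw [if_neg (by omega), if_pos (by omega)]
      congr 1
      omega
  have huniq : ∀ i, OccursAt P (U ++ P ++ V) i → i = U.length := by
    intro i hi
    exact Finset.card_le_one.mp (le_of_eq honce) i ((mem_occ_iff _ _ _).2 hi)
      U.length ((mem_occ_iff _ _ _).2 hoccU)
  -- C: a structural near-occurrence whose forced character is `a` gives a real occurrence
  have hC : ∀ d, 1 ≤ d → d ≤ V.length →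
      (∀ t, t + d + 1 < n → P[t]? = P[t + d]?) →
      (∀ j, j < d → P[n - d + j]? = V[j]?) →
      P[n - 1 - d]? = some a → False := by
    intro d hd1 hdV hA hB hforced
    have hocc : OccursAt P (U ++ P ++ V) (U.length + d) := by
      rw [occursAt_iff]
      constructor
      · simp [List.length_append]; omega
      · intro t ht
        rw [hTget]
        rw [if_neg (by omega)]
        by_cases h2 : d + t < n
        · rw [if_pos (by omega)]
          have hx : U.length + d + t - U.length = t + d := by omega
          rw [hx]
          by_cases h3 : t + d + 1 < n
          · exact (hA t h3).symm
          · have h4 : t = n - 1 - d := by omega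
            have h5 : t + d = n - 1 := by omega
            rw [h5, h4, hforced, ha]
        · rw [if_neg (by omega)]
          have hj : U.length + d + t - U.length - n = d + t - n := by omega
          rw [hj]
          have := hB (d + t - n) (by omega)
          have hx : n - d + (d + t - n) = t := by omega
          rw [hx] at this
          exact this.symm
    have := huniq _ hocc
    omega
  -- key extraction: any occurrence in the modified text forces a near-occurrence
  have key : ∀ c : α, c ≠ a → ∀ i, OccursAt P (U ++ (P.take (n - 1) ++ [c]) ++ V) i →
      ∃ d, 1 ≤ d ∧ d ≤ V.length ∧ P[n - 1 - d]? = some c ∧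
        (∀ t, t + d + 1 < n → P[t]? = P[t + d]?) ∧
        (∀ j, j < d → P[n - d + j]? = V[j]?) := by
    intro c hca i hi
    rw [occursAt_iff, hT'len c] at hi
    obtain ⟨hlen, hpt⟩ := hi
    rcases lt_trichotomy i U.length with hlt | heq | hgt
    · -- occurrence avoids changed position: occurrence in T, contradiction
      exfalso
      have hocc : OccursAt P (U ++ P ++ V) i := by
        rw [occursAt_iff]
        constructor
        · simp [List.length_append]; omega
        · intro t ht
          have h := hpt t ht
          rw [hT'get] at h
          rw [hTget]
          by_cases h1 : i + t < U.length
          · rwa [if_pos h1] at h ⊢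
          · rw [if_neg h1] at h ⊢
            rw [if_pos (by omega)] at h ⊢
            exact h
      have := huniq _ hocc
      omega
    · -- occurrence at |U|: changed character must equal a
      exfalso
      have h := hpt (n - 1) (by omega)
      rw [hT'get, heq] at h
      rw [if_neg (by omega), if_neg (by omega), if_pos rfl] at h
      rw [ha] at h
      injection h with h'
      exact hca h'
    · -- occurrence with positive shift d
      refine ⟨i - U.length, by omega, by omega, ?_, ?_, ?_⟩
      · have h := hpt (n - 1 - (i - U.length)) (by omega)
        rw [hT'get] at h
        have hx : i + (n - 1 - (i - U.length)) = U.length + (n - 1) := by omega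
        rw [hx, if_neg (by omega), if_neg (by omega), if_pos rfl] at h
        exact h.symm
      · intro t ht
        have h := hpt t (by omega)
        rw [hT'get] at h
        rw [if_neg (by omega), if_pos (by omega)] at h
        have hx : i + t - U.length = t + (i - U.length) := by omega
        rw [hx] at h
        exact h.symm
      · intro j hj
        have h := hpt (n - (i - U.length) + j) (by omega)
        rw [hT'get] at h
        rw [if_neg (by omega), if_neg (by omega), if_neg (by omega)] at h
        have hx : i + (n - (i - U.length) + j) - U.length - n = j := by omega
        rw [hx] at h
        exact h.symm
  -- two distinct shifts are impossible
  have hpair : ∀ d1 d2, d1 < d2 →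
      (1 ≤ d1 ∧ d1 ≤ V.length ∧
        (∀ t, t + d1 + 1 < n → P[t]? = P[t + d1]?) ∧
        (∀ j, j < d1 → P[n - d1 + j]? = V[j]?)) →
      (1 ≤ d2 ∧ d2 ≤ V.length ∧
        (∀ t, t + d2 + 1 < n → P[t]? = P[t + d2]?) ∧
        (∀ j, j < d2 → P[n - d2 + j]? = V[j]?)) → False := by
    rintro d1 d2 hlt ⟨hd11, hd1V, hA1, hB1⟩ ⟨hd21, hd2V, hA2, hB2⟩
    have e1 : P[n - 1]? = V[d1 - 1]? := by
      have := hB1 (d1 - 1) (by omega)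
      have hx : n - d1 + (d1 - 1) = n - 1 := by omega
      rwa [hx] at this
    have e2 : P[n - d2 + d1 - 1]? = V[d1 - 1]? := by
      have := hB2 (d1 - 1) (by omega)
      have hx : n - d2 + (d1 - 1) = n - d2 + d1 - 1 := by omega
      rwa [hx] at this
    have e3 : P[n - 1 - d2]? = P[n - d2 + d1 - 1]? := by
      have := hA1 (n - 1 - d2) (by omega)
      have hx : n - 1 - d2 + d1 = n - d2 + d1 - 1 := by omega
      rwa [hx] at this
    have e4 : P[n - 1 - d2]? = some a := by
      rw [e3, e2, ← e1, ha]
    exact hC d2 hd21 hd2V hA2 hB2 e4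
  -- choose two distinct characters different from a
  obtain ⟨c1, hc1, c2, hc2, hcne⟩ : ∃ c1 ∈ Finset.univ.erase a, ∃ c2 ∈ Finset.univ.erase a, c1 ≠ c2 := by
    apply Finset.one_lt_card.mp
    rw [Finset.card_erase_of_mem (Finset.mem_univ a), Finset.card_univ]
    omega
  have hc1a : c1 ≠ a := (Finset.mem_erase.mp hc1).1
  have hc2a : c2 ≠ a := (Finset.mem_erase.mp hc2).1
  -- assemble conclusion for a good character c
  have final : ∀ c : α, c ≠ a →
      (∀ i, ¬ OccursAt P (U ++ (P.take (n - 1) ++ [c]) ++ V) i) →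
      ∃ P' : List α, P'.length = P.length ∧ hamming P P' = 1 ∧
        occ P (U ++ P' ++ V) = ∅ := by
    intro c hca hno
    refine ⟨P.take (n - 1) ++ [c], hP'len c, ?_, ?_⟩
    · unfold hamming
      have hget : ∀ t, t < n - 1 → (P.take (n - 1) ++ [c])[t]? = P[t]? := by
        intro t ht
        rw [List.getElem?_append_left (by rw [List.length_take]; omega), List.getElem?_take_of_lt ht]
      have hgetl : (P.take (n - 1) ++ [c])[n - 1]? = some c := by
        rw [List.getElem?_append_right (by rw [List.length_take]; omega)]
        have : n - 1 - (P.take (n - 1)).length = 0 := by rw [List.length_take]; omega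
        rw [this]; rfl
      have hrange : List.range n = List.range (n - 1) ++ [n - 1] := by
        conv_lhs => rw [show n = (n - 1) + 1 by omega]
        exact List.range_succ (n := n - 1)
      rw [show P.length = n from rfl, hrange, List.filter_append]
      have h1 : (List.range (n - 1)).filter
          (fun i => decide (P[i]? ≠ (P.take (n - 1) ++ [c])[i]?)) = [] := by
        rw [List.filter_eq_nil_iff]
        intro t ht
        rw [List.mem_range] at ht
        simp only [decide_eq_true_eq, not_not]
        rw [hget t ht]
      have h2 : [n - 1].filter
          (fun i => decide (P[i]? ≠ (P.take (n - 1) ++ [c])[i]?)) = [n - 1] := by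
        rw [List.filter_cons, if_pos, List.filter_nil]
        simp only [decide_eq_true_eq]
        rw [hgetl, ha]
        simp only [ne_eq, Option.some.injEq]
        intro h
        exact hca h.symm
      rw [h1, h2]
      rfl
    · apply Finset.eq_empty_iff_forall_notMem.mpr
      intro i hi
      exact hno i ((mem_occ_iff _ _ _).1 hi)
  -- case analysis: at least one of c1, c2 works
  by_cases h1 : ∀ i, ¬ OccursAt P (U ++ (P.take (n - 1) ++ [c1]) ++ V) i
  · exact final c1 hc1a h1
  · push_neg at h1
    obtain ⟨i1, hi1⟩ := h1
    obtain ⟨d1, hd11, hd1V, hf1, hA1, hB1⟩ := key c1 hc1a i1 hi1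
    apply final c2 hc2a
    intro i2 hi2
    obtain ⟨d2, hd21, hd2V, hf2, hA2, hB2⟩ := key c2 hc2a i2 hi2
    have hdne : d1 ≠ d2 := by
      intro h
      rw [h, hf2] at hf1
      injection hf1 with h'
      exact hcne h'.symm
    rcases lt_or_gt_of_ne hdne with h | h
    · exact hpair d1 d2 h ⟨hd11, hd1V, hA1, hB1⟩ ⟨hd21, hd2V, hA2, hB2⟩
    · exact hpair d2 d1 h ⟨hd21, hd2V, hA2, hB2⟩ ⟨hd11, hd1V, hA1, hB1⟩
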